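/- Let m and t be positive integers with t ≥ 250. If m^3 + 3m^2 + 2m ≥ 2·t(t+1)(2t-5) + 30, then 50m > 79t. -/
import Mathlib

theorem stmt11 (m t : ℤ) (hm : 0 < m) (ht : t ≥ 250)
    (h : m ^ 3 + 3 * m ^ 2 + 2 * m ≥ 2 * (t * (t + 1) * (2 * t - 5)) + 30) :
    50 * m > 79 * t := by
  by_contra hc
  push_neg at hc
  nlinarith [sq_nonneg m, sq_nonneg t, sq_nonneg (50*m - 79*t), mul_pos hm hm, sq_nonneg (m*t), mul_nonneg (sub_nonneg.2 hc) (sub_nonneg.2 hc), mul_nonneg (mul_nonneg (sub_nonneg.2 hc) (sub_nonneg.2 hc)) (by linarith : (0:ℤ) ≤ t)]
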